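/- Let R be a commutative ring, and θ : R → A, φ : R → B ring homomorphisms of commutative rings. Set Ā = A/θ(ker φ)A, B̄ = B/φ(ker θ)B, and R̄ = R/(ker θ + ker φ). Then there is a canonical isomorphism of rings A ⊗_R B ≅ Ā ⊗_{R̄} B̄. -/

import Mathlib

open TensorProduct

set_option maxHeartbeats 2000000 in
/-- Let `θ : R → A` and `φ : R → B` be homomorphisms of commutative rings.
With `Ā = A/θ(ker φ)A`, `B̄ = B/φ(ker θ)B` and `R̄ = R/(ker θ + ker φ)`, there is a
canonical ring isomorphism `A ⊗_R B ≅ Ā ⊗_{R̄} B̄`. -/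
theorem tensor_quotient_ring_iso
    (R A B : Type*) [CommRing R] [CommRing A] [CommRing B]
    (θ : R →+* A) (φ : R →+* B) :
    letI : Algebra R A := θ.toAlgebra
    letI : Algebra R B := φ.toAlgebra
    letI : Algebra (R ⧸ (RingHom.ker θ ⊔ RingHom.ker φ))
        (A ⧸ Ideal.map θ (RingHom.ker φ)) :=
      (Ideal.quotientMap (I := RingHom.ker θ ⊔ RingHom.ker φ)
        (Ideal.map θ (RingHom.ker φ)) θ
        (by
          refine sup_le ?_ Ideal.le_comap_map
          intro r hr
          have h0 : θ r = 0 := RingHom.mem_ker.mp hr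
          simp [Ideal.mem_comap, h0])).toAlgebra
    letI : Algebra (R ⧸ (RingHom.ker θ ⊔ RingHom.ker φ))
        (B ⧸ Ideal.map φ (RingHom.ker θ)) :=
      (Ideal.quotientMap (I := RingHom.ker θ ⊔ RingHom.ker φ)
        (Ideal.map φ (RingHom.ker θ)) φ
        (by
          refine sup_le Ideal.le_comap_map ?_
          intro r hr
          have h0 : φ r = 0 := RingHom.mem_ker.mp hr
          simp [Ideal.mem_comap, h0])).toAlgebra
    Nonempty ((A ⊗[R] B) ≃+*
      ((A ⧸ Ideal.map θ (RingHom.ker φ)) ⊗[R ⧸ (RingHom.ker θ ⊔ RingHom.ker φ)]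
        (B ⧸ Ideal.map φ (RingHom.ker θ)))) := by
  letI : Algebra R A := θ.toAlgebra
  letI : Algebra R B := φ.toAlgebra
  set K : Ideal R := RingHom.ker θ ⊔ RingHom.ker φ with hK
  set JA : Ideal A := Ideal.map θ (RingHom.ker φ) with hJA
  set JB : Ideal B := Ideal.map φ (RingHom.ker θ) with hJB
  have hcA : K ≤ Ideal.comap θ JA := by
    rw [hK]
    refine sup_le ?_ Ideal.le_comap_map
    intro r hr
    have h0 : θ r = 0 := RingHom.mem_ker.mp hr
    simp [Ideal.mem_comap, h0]
  have hcB : K ≤ Ideal.comap φ JB := by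
    rw [hK]
    refine sup_le Ideal.le_comap_map ?_
    intro r hr
    have h0 : φ r = 0 := RingHom.mem_ker.mp hr
    simp [Ideal.mem_comap, h0]
  let ρA : (R ⧸ K) →+* (A ⧸ JA) := Ideal.quotientMap JA θ hcA
  let ρB : (R ⧸ K) →+* (B ⧸ JB) := Ideal.quotientMap JB φ hcB
  letI instA' : Algebra (R ⧸ K) (A ⧸ JA) := ρA.toAlgebra
  letI instB' : Algebra (R ⧸ K) (B ⧸ JB) := ρB.toAlgebra
  refine ⟨?_⟩
  -- key fact : θ r ⊗ 1 = 1 ⊗ φ r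
  have key : ∀ r : R, (θ r) ⊗ₜ[R] (1 : B) = (1 : A) ⊗ₜ[R] (φ r) := by
    intro r
    have h1 : θ r = r • (1 : A) := Algebra.algebraMap_eq_smul_one r
    have h2 : φ r = r • (1 : B) := Algebra.algebraMap_eq_smul_one r
    rw [h1, h2, TensorProduct.smul_tmul]
  have mkA : ∀ r : R, algebraMap (R ⧸ K) (A ⧸ JA) (Ideal.Quotient.mk K r)
      = Ideal.Quotient.mk JA (θ r) := fun r => Ideal.quotientMap_mk (H := hcA)
  have mkB : ∀ r : R, algebraMap (R ⧸ K) (B ⧸ JB) (Ideal.Quotient.mk K r)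
      = Ideal.Quotient.mk JB (φ r) := fun r => Ideal.quotientMap_mk (H := hcB)
  -- backward direction components
  let inclA : A →+* A ⊗[R] B := Algebra.TensorProduct.includeLeftRingHom
  let inclB : B →+* A ⊗[R] B :=
    (Algebra.TensorProduct.includeRight : B →ₐ[R] A ⊗[R] B).toRingHom
  have hKA : ∀ a ∈ JA, inclA a = 0 := by
    have : JA ≤ RingHom.ker inclA := by
      rw [hJA, Ideal.map_le_iff_le_comap]
      intro r hr
      rw [Ideal.mem_comap, RingHom.mem_ker]
      show (θ r) ⊗ₜ[R] (1 : B) = 0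
      rw [key r, RingHom.mem_ker.mp hr, TensorProduct.tmul_zero]
    exact fun a ha => RingHom.mem_ker.mp (this ha)
  have hKB : ∀ b ∈ JB, inclB b = 0 := by
    have : JB ≤ RingHom.ker inclB := by
      rw [hJB, Ideal.map_le_iff_le_comap]
      intro r hr
      rw [Ideal.mem_comap, RingHom.mem_ker]
      show (1 : A) ⊗ₜ[R] (φ r) = 0
      rw [← key r, RingHom.mem_ker.mp hr, TensorProduct.zero_tmul]
    exact fun b hb => RingHom.mem_ker.mp (this hb)
  have hKR : ∀ r ∈ K, (inclA.comp θ) r = 0 := by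
    intro r hr
    rw [hK] at hr
    have hle : RingHom.ker θ ⊔ RingHom.ker φ ≤ RingHom.ker (inclA.comp θ) := by
      refine sup_le ?_ ?_
      · intro x hx
        have h0 : θ x = 0 := RingHom.mem_ker.mp hx
        simp [RingHom.mem_ker, RingHom.comp_apply, h0]
      · intro x hx
        rw [RingHom.mem_ker]
        show (θ x) ⊗ₜ[R] (1 : B) = 0
        rw [key x, RingHom.mem_ker.mp hx, TensorProduct.tmul_zero]
    exact RingHom.mem_ker.mp (hle hr)
  let ψ : (R ⧸ K) →+* A ⊗[R] B := Ideal.Quotient.lift K (inclA.comp θ) hKR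
  letI instRT : Algebra (R ⧸ K) (A ⊗[R] B) := ψ.toAlgebra
  have mkψ : ∀ r : R, algebraMap (R ⧸ K) (A ⊗[R] B) (Ideal.Quotient.mk K r)
      = (θ r) ⊗ₜ[R] (1 : B) := fun r => Ideal.Quotient.lift_mk K _ hKR
  let f0 : (A ⧸ JA) →+* A ⊗[R] B := Ideal.Quotient.lift JA inclA hKA
  let g0 : (B ⧸ JB) →+* A ⊗[R] B := Ideal.Quotient.lift JB inclB hKB
  have mkf : ∀ a : A, f0 (Ideal.Quotient.mk JA a) = a ⊗ₜ[R] (1 : B) :=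
    fun a => Ideal.Quotient.lift_mk JA inclA hKA
  have mkg : ∀ b : B, g0 (Ideal.Quotient.mk JB b) = (1 : A) ⊗ₜ[R] b :=
    fun b => Ideal.Quotient.lift_mk JB inclB hKB
  let f : (A ⧸ JA) →ₐ[R ⧸ K] A ⊗[R] B :=
    { toRingHom := f0
      commutes' := by
        intro r'
        obtain ⟨r, rfl⟩ := Ideal.Quotient.mk_surjective r'
        show f0 (algebraMap (R ⧸ K) (A ⧸ JA) (Ideal.Quotient.mk K r))
          = algebraMap (R ⧸ K) (A ⊗[R] B) (Ideal.Quotient.mk K r)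
        rw [mkA, mkf, mkψ] }
  let g : (B ⧸ JB) →ₐ[R ⧸ K] A ⊗[R] B :=
    { toRingHom := g0
      commutes' := by
        intro r'
        obtain ⟨r, rfl⟩ := Ideal.Quotient.mk_surjective r'
        show g0 (algebraMap (R ⧸ K) (B ⧸ JB) (Ideal.Quotient.mk K r))
          = algebraMap (R ⧸ K) (A ⊗[R] B) (Ideal.Quotient.mk K r)
        rw [mkB, mkg, mkψ, key] }
  let back : ((A ⧸ JA) ⊗[R ⧸ K] (B ⧸ JB)) →ₐ[R ⧸ K] A ⊗[R] B :=
    Algebra.TensorProduct.productMap f g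
  -- forward direction
  let χ : R →+* ((A ⧸ JA) ⊗[R ⧸ K] (B ⧸ JB)) :=
    (algebraMap (R ⧸ K) ((A ⧸ JA) ⊗[R ⧸ K] (B ⧸ JB))).comp (Ideal.Quotient.mk K)
  letI instRT' : Algebra R ((A ⧸ JA) ⊗[R ⧸ K] (B ⧸ JB)) := χ.toAlgebra
  have mkχ : ∀ r : R, algebraMap R ((A ⧸ JA) ⊗[R ⧸ K] (B ⧸ JB)) r
      = (Ideal.Quotient.mk JA (θ r)) ⊗ₜ[R ⧸ K] (1 : B ⧸ JB) := by
    intro r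
    show χ r = _
    show algebraMap (R ⧸ K) ((A ⧸ JA) ⊗[R ⧸ K] (B ⧸ JB)) (Ideal.Quotient.mk K r) = _
    rw [Algebra.TensorProduct.algebraMap_apply, mkA]
  have key' : ∀ r' : R ⧸ K,
      (algebraMap (R ⧸ K) (A ⧸ JA) r') ⊗ₜ[R ⧸ K] (1 : B ⧸ JB)
        = (1 : A ⧸ JA) ⊗ₜ[R ⧸ K] (algebraMap (R ⧸ K) (B ⧸ JB) r') := by
    intro r'
    have h1 : algebraMap (R ⧸ K) (A ⧸ JA) r' = r' • (1 : A ⧸ JA) :=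
      Algebra.algebraMap_eq_smul_one r'
    have h2 : algebraMap (R ⧸ K) (B ⧸ JB) r' = r' • (1 : B ⧸ JB) :=
      Algebra.algebraMap_eq_smul_one r'
    rw [h1, h2, TensorProduct.smul_tmul]
  let fA : A →ₐ[R] ((A ⧸ JA) ⊗[R ⧸ K] (B ⧸ JB)) :=
    { toRingHom := (Algebra.TensorProduct.includeLeftRingHom).comp (Ideal.Quotient.mk JA)
      commutes' := by
        intro r
        show (Ideal.Quotient.mk JA (θ r)) ⊗ₜ[R ⧸ K] (1 : B ⧸ JB)
          = algebraMap R ((A ⧸ JA) ⊗[R ⧸ K] (B ⧸ JB)) r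
        rw [mkχ] }
  let fB : B →ₐ[R] ((A ⧸ JA) ⊗[R ⧸ K] (B ⧸ JB)) :=
    { toRingHom := ((Algebra.TensorProduct.includeRight :
        (B ⧸ JB) →ₐ[R ⧸ K] ((A ⧸ JA) ⊗[R ⧸ K] (B ⧸ JB))).toRingHom).comp (Ideal.Quotient.mk JB)
      commutes' := by
        intro r
        show (1 : A ⧸ JA) ⊗ₜ[R ⧸ K] (Ideal.Quotient.mk JB (φ r))
          = algebraMap R ((A ⧸ JA) ⊗[R ⧸ K] (B ⧸ JB)) r
        rw [mkχ, ← mkB, ← mkA, key'] }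
  let forward : (A ⊗[R] B) →ₐ[R] ((A ⧸ JA) ⊗[R ⧸ K] (B ⧸ JB)) :=
    Algebra.TensorProduct.productMap fA fB
  have hforward : ∀ (a : A) (b : B), forward (a ⊗ₜ[R] b)
      = (Ideal.Quotient.mk JA a) ⊗ₜ[R ⧸ K] (Ideal.Quotient.mk JB b) := by
    intro a b
    show Algebra.TensorProduct.productMap fA fB (a ⊗ₜ b) = _
    rw [Algebra.TensorProduct.productMap_apply_tmul]
    show ((Ideal.Quotient.mk JA a) ⊗ₜ[R ⧸ K] (1 : B ⧸ JB)) *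
        ((1 : A ⧸ JA) ⊗ₜ[R ⧸ K] (Ideal.Quotient.mk JB b)) = _
    rw [Algebra.TensorProduct.tmul_mul_tmul, mul_one, one_mul]
  have hback : ∀ (a : A) (b : B),
      back ((Ideal.Quotient.mk JA a) ⊗ₜ[R ⧸ K] (Ideal.Quotient.mk JB b)) = a ⊗ₜ[R] b := by
    intro a b
    show Algebra.TensorProduct.productMap f g _ = _
    rw [Algebra.TensorProduct.productMap_apply_tmul]
    show f0 (Ideal.Quotient.mk JA a) * g0 (Ideal.Quotient.mk JB b) = _
    rw [mkf, mkg, Algebra.TensorProduct.tmul_mul_tmul, mul_one, one_mul]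
  refine (fun h₂ h₁ => RingEquiv.ofRingHom forward.toRingHom back.toRingHom h₁ h₂) ?_ ?_
  · refine RingHom.ext fun x => ?_
    simp only [RingHom.coe_comp, Function.comp_apply, RingHom.id_apply]
    show back (forward x) = x
    induction x using TensorProduct.induction_on with
    | zero => simp
    | tmul a b => rw [hforward, hback]
    | add x y hx hy => rw [map_add, map_add, hx, hy]
  · refine RingHom.ext fun x => ?_
    simp only [RingHom.coe_comp, Function.comp_apply, RingHom.id_apply]
    show forward (back x) = x
    induction x using TensorProduct.induction_on with
    | zero => simp
    | tmul a' b' =>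
        obtain ⟨a, rfl⟩ := Ideal.Quotient.mk_surjective a'
        obtain ⟨b, rfl⟩ := Ideal.Quotient.mk_surjective b'
        rw [hback, hforward]
    | add x y hx hy => rw [map_add, map_add, hx, hy]
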